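/- Let G be an abelian group, g ∈ G with g² ≠ 1, and let J be a T_G-ideal with Id_G(UT₃⁽⁻⁾, Γ(g,g⁻¹)) ⊆ J. Let A^{(g,g⁻¹)} be the set of polynomials of type (g,g⁻¹) belonging to J. Then there exists a finite subset Ã ⊆ A^{(g,g⁻¹)} such that A^{(g,g⁻¹)} ⊆ ⟨Ã⟩^{T_G} + Id_G(UT₃⁽⁻⁾, Γ(g,g⁻¹)). -/

import Mathlib

open FreeLieAlgebra

/-- The free `G`-graded Lie algebra over `K` on variables `x_{i,g}`, `i ∈ ℕ`, `g ∈ G`. -/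
abbrev FL (K : Type*) [Field K] (G : Type*) := FreeLieAlgebra K (ℕ × G)

section Framework

variable (K : Type*) [Field K] (G : Type*) [CommGroup G]

attribute [local instance 100] LieRing.ofAssociativeRing

/-- `IsHom K G g a` : `a` is homogeneous of degree `g` in the free graded Lie algebra. -/
inductive IsHom : G → FL K G → Prop
  | var (i : ℕ) (g : G) : IsHom g (of K (i, g))
  | zero (g : G) : IsHom g 0
  | add {g : G} {a b : FL K G} : IsHom g a → IsHom g b → IsHom g (a + b)
  | smul {g : G} {a : FL K G} (c : K) : IsHom g a → IsHom g (c • a)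
  | lie {g h : G} {a b : FL K G} : IsHom g a → IsHom h b → IsHom (g * h) ⁅a, b⁆

/-- A graded substitution: an endomorphism sending each variable `x_{i,g}` to a homogeneous
element of degree `g`. -/
def IsGradedSubst (φ : FL K G →ₗ⁅K⁆ FL K G) : Prop :=
  ∀ (i : ℕ) (g : G), IsHom K G g (φ (of K (i, g)))

/-- A `T_G`-ideal: a Lie ideal invariant under all graded substitutions. -/
def IsTIdeal (I : LieIdeal K (FL K G)) : Prop :=
  ∀ φ : FL K G →ₗ⁅K⁆ FL K G, IsGradedSubst K G φ → ∀ a ∈ I, φ a ∈ I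

/-- The `T_G`-ideal generated by a set `S`. -/
noncomputable def tClosure (S : Set (FL K G)) : LieIdeal K (FL K G) :=
  sInf {I : LieIdeal K (FL K G) | IsTIdeal K G I ∧ S ⊆ ↑I}

/-- The graded polynomial identities of a `G`-graded Lie algebra `(A, Γ)`, as a Lie ideal of the
free graded Lie algebra. -/
def gradedIdeal (A : Type*) [LieRing A] [LieAlgebra K A] (Γ : G → Submodule K A) :
    LieIdeal K (FL K G) where
  carrier := {f | ∀ ψ : FL K G →ₗ⁅K⁆ A, (∀ (i : ℕ) (g : G), ψ (of K (i, g)) ∈ Γ g) → ψ f = 0}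
  add_mem' := by
    intro a b ha hb ψ hψ
    rw [map_add, ha ψ hψ, hb ψ hψ, add_zero]
  zero_mem' := by
    intro ψ _
    exact ψ.map_zero
  smul_mem' := by
    intro c a ha ψ hψ
    rw [map_smul, ha ψ hψ, smul_zero]
  lie_mem := by
    intro x m hm ψ hψ
    rw [ψ.map_lie, hm ψ hψ, lie_zero]

/-- Left-normed iterated commutator `[x, l₁, l₂, …]`. -/
noncomputable def lnorm (x : FL K G) (l : List (FL K G)) : FL K G := l.foldl (fun a b => ⁅a, b⁆) x

/-- The list `y₁^{(p₁)}, …, y_r^{(p_r)}` of trivial-degree variables with multiplicities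
(0-indexed: the variables are `x_{0,1}, …, x_{r-1,1}`). -/
noncomputable def yRun (p : ℕ → ℕ) : ℕ → List (FL K G)
  | 0 => []
  | n + 1 => yRun p n ++ List.replicate (p n) (of K (n, (1 : G)))

/-- 3×3 matrices. -/
abbrev M3 (K : Type*) [Field K] := Matrix (Fin 3) (Fin 3) K

/-- Matrix units. -/
def E3 (i j : Fin 3) : M3 K := Matrix.single i j 1

/-- The elementary grading `Γ(g,h)` on upper triangular 3×3 matrices:
`deg e₁₁ = deg e₂₂ = deg e₃₃ = 1`, `deg e₁₂ = g`, `deg e₂₃ = h`, `deg e₁₃ = gh`.  The component of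
degree `l` is the span of the matrix units of degree `l`. -/
def utGrading (g h : G) : G → Submodule K (M3 K) := fun l =>
  Submodule.span K {m : M3 K |
    (l = 1 ∧ (m = E3 K 0 0 ∨ m = E3 K 1 1 ∨ m = E3 K 2 2)) ∨
    (l = g ∧ m = E3 K 0 1) ∨ (l = h ∧ m = E3 K 1 2) ∨ (l = g * h ∧ m = E3 K 0 2)}

/-- The support of the grading `Γ(g,h)`. -/
def utSupp (g h : G) : Set G := {l | utGrading K G g h l ≠ ⊥}

/-- The graded identities `Id_G(UT₃⁽⁻⁾, Γ(g,h))`. -/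
def IdUT3 (g h : G) : LieIdeal K (FL K G) := gradedIdeal K G (M3 K) (utGrading K G g h)

/-- 2×2 matrices. -/
abbrev M2 (K : Type*) [Field K] := Matrix (Fin 2) (Fin 2) K

/-- Matrix units. -/
def E2 (i j : Fin 2) : M2 K := Matrix.single i j 1

/-- The space of upper triangular 2×2 matrices, `UT₂⁽⁻⁾`. -/
def ut2 : Submodule K (M2 K) := Submodule.span K {E2 K 0 0, E2 K 1 1, E2 K 0 1}

/-- Ordinary (ungraded) Lie polynomial identities of `UT₂⁽⁻⁾`. -/
def IdUT2 : Set (FL K G) :=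
  {f | ∀ ψ : FL K G →ₗ⁅K⁆ M2 K, (∀ (i : ℕ) (g : G), ψ (of K (i, g)) ∈ ut2 K) → ψ f = 0}

/-- The free Lie subalgebra `L(Y)` on the trivial-degree variables. -/
noncomputable def LY : LieSubalgebra K (FL K G) :=
  LieSubalgebra.lieSpan K (FL K G) {a | ∃ i : ℕ, a = of K (i, (1 : G))}

/-- Exponent bound: `0 ≤ p ℓ < |K|` when `K` is finite (no bound when `K` is infinite). -/
def expOK (r : ℕ) (p : ℕ → ℕ) : Prop := ∀ ℓ < r, Finite K → p ℓ < Nat.card K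

end Framework

/-! ## Statement 11 : finite basis for sets of polynomials of type `(g, g⁻¹)` -/

/-- The commutator `[[x_g, y₁^{(p₁)},…,y_r^{(p_r)}], [x_{g⁻¹}, y₁^{(q₁)},…,y_r^{(q_r)}]]`. -/
noncomputable def monAU (K : Type*) [Field K] {G : Type*} [CommGroup G] (g : G)
    (r : ℕ) (p q : ℕ → ℕ) : FL K G :=
  ⁅lnorm K G (of K (0, g)) (yRun K G p r), lnorm K G (of K (0, g⁻¹)) (yRun K G q r)⁆

/-- Data describing a polynomial of type `(g, g⁻¹)`. -/
structure AUData (K : Type*) [Field K] where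
  /-- number of `y` variables -/
  r : ℕ
  /-- number of summands -/
  t : ℕ
  /-- coefficients -/
  α : Fin t → K
  /-- exponents on the `y`'s inside the first inner commutator -/
  p : Fin t → ℕ → ℕ
  /-- exponents on the `y`'s inside the second inner commutator -/
  q : Fin t → ℕ → ℕ

/-- The polynomial described by the data. -/
noncomputable def AUData.elem {K : Type*} [Field K] {G : Type*} [CommGroup G] (g : G)
    (d : AUData K) : FL K G :=
  ∑ s : Fin d.t, d.α s • monAU K g d.r (d.p s) (d.q s)

/-- Validity: at least one summand, all coefficients nonzero, all summands of the same
multidegree in the `y`'s, and pairwise distinct commutators. -/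
def AUData.Valid {K : Type*} [Field K] (d : AUData K) : Prop :=
  0 < d.t ∧ (∀ s, d.α s ≠ 0) ∧
  (∀ s s' : Fin d.t, ∀ ℓ < d.r, d.p s ℓ + d.q s ℓ = d.p s' ℓ + d.q s' ℓ) ∧
  (∀ s s' : Fin d.t, (∀ ℓ < d.r, d.p s ℓ = d.p s' ℓ ∧ d.q s ℓ = d.q s' ℓ) → s = s')

/-- `f` is a polynomial of type `(g, g⁻¹)`. -/
def IsAU (K : Type*) [Field K] {G : Type*} [CommGroup G] (g : G) (f : FL K G) : Prop :=
  ∃ d : AUData K, d.Valid ∧ f = AUData.elem g d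

noncomputable section PartB

abbrev Mon := (ℕ × Bool) →₀ ℕ

variable {K : Type*} [Field K]

abbrev RR (K : Type*) [Field K] := MvPolynomial (ℕ × Bool) K

def vmap (π : ℕ → ℕ) : ℕ × Bool → ℕ × Bool := Prod.map π id

lemma vmap_injective {π : ℕ → ℕ} (h : StrictMono π) : Function.Injective (vmap π) :=
  Prod.map_injective.mpr ⟨h.injective, Function.injective_id⟩

lemma vmap_comp (π σ : ℕ → ℕ) : vmap π ∘ vmap σ = vmap (π ∘ σ) := by
  funext x; cases x; rfl

lemma vmap_id : vmap id = id := by funext x; cases x; rfl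

/-- total degree of a monomial -/
def mdeg (m : Mon) : ℕ := m.sum fun _ e => e

lemma mdeg_add (m k : Mon) : mdeg (m + k) = mdeg m + mdeg k := by
  classical
  simpa [mdeg] using Finsupp.sum_add_index' (by simp) (by simp)

lemma mdeg_mapDomain {π : ℕ → ℕ} (h : StrictMono π) (m : Mon) :
    mdeg (Finsupp.mapDomain (vmap π) m) = mdeg m := by
  classical
  simpa [mdeg] using Finsupp.sum_mapDomain_index (f := vmap π) (s := m)
    (h := fun _ e => e) (by simp) (by simp)

lemma single_le_mdeg (m : Mon) (x : ℕ × Bool) : m x ≤ mdeg m := by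
  classical
  by_cases hx : x ∈ m.support
  · exact Finset.single_le_sum (fun _ _ => Nat.zero_le _) hx
  · simp [Finsupp.notMem_support_iff.mp hx]

/-- order on variables; larger = more significant -/
def vlt (x y : ℕ × Bool) : Prop := x.1 < y.1 ∨ (x.1 = y.1 ∧ x.2 < y.2)

lemma vlt_trans {x y z : ℕ × Bool} (h1 : vlt x y) (h2 : vlt y z) : vlt x z := by
  rcases h1 with h1 | ⟨h1, h1'⟩ <;> rcases h2 with h2 | ⟨h2, h2'⟩
  · exact Or.inl (h1.trans h2)
  · exact Or.inl (h2 ▸ h1)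
  · exact Or.inl (h1 ▸ h2)
  · exact Or.inr ⟨h1.trans h2, h1'.trans h2'⟩

lemma vlt_irrefl (x : ℕ × Bool) : ¬ vlt x x := by
  rintro (h | ⟨-, h⟩) <;> exact absurd h (lt_irrefl _)

lemma vlt_total {x y : ℕ × Bool} (h : x ≠ y) : vlt x y ∨ vlt y x := by
  rcases lt_trichotomy x.1 y.1 with h1 | h1 | h1
  · exact Or.inl (Or.inl h1)
  · rcases lt_trichotomy x.2 y.2 with h2 | h2 | h2
    · exact Or.inl (Or.inr ⟨h1, h2⟩)
    · exact absurd (Prod.ext h1 h2) h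
    · exact Or.inr (Or.inr ⟨h1.symm, h2⟩)
  · exact Or.inr (Or.inl h1)

lemma vlt_vmap_iff {π : ℕ → ℕ} (hπ : StrictMono π) {x y : ℕ × Bool} :
    vlt (vmap π x) (vmap π y) ↔ vlt x y := by
  unfold vlt vmap
  simp only [Prod.map_fst, Prod.map_snd, id]
  constructor
  · rintro (h | ⟨h, h'⟩)
    · exact Or.inl (hπ.lt_iff_lt.mp h)
    · exact Or.inr ⟨hπ.injective h, h'⟩
  · rintro (h | ⟨h, h'⟩)
    · exact Or.inl (hπ h)
    · exact Or.inr ⟨congrArg π h, h'⟩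

/-- generic existence of a maximum in a nonempty finset for a transitive total relation -/
lemma exists_rel_max {α : Type*} (r : α → α → Prop)
    (htrans : ∀ {x y z}, r x y → r y z → r x z)
    (htot : ∀ x y, x ≠ y → r x y ∨ r y x) (s : Finset α) (hs : s.Nonempty) :
    ∃ m ∈ s, ∀ x ∈ s, x ≠ m → r x m := by
  classical
  induction s using Finset.induction with
  | empty => exact absurd hs (by simp)
  | @insert a s ha ih =>
    rcases s.eq_empty_or_nonempty with rfl | hs'
    · exact ⟨a, by simp, by intro x hx hne; simp at hx; exact absurd hx hne⟩
    · obtain ⟨m, hm, hmax⟩ := ih hs'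
      by_cases ham : a = m
      · refine ⟨m, Finset.mem_insert_of_mem hm, ?_⟩
        intro x hx hne
        rcases Finset.mem_insert.mp hx with rfl | hx
        · exact absurd ham hne
        · exact hmax x hx hne
      · rcases htot a m ham with h | h
        · refine ⟨m, Finset.mem_insert_of_mem hm, ?_⟩
          intro x hx hne
          rcases Finset.mem_insert.mp hx with rfl | hx
          · exact h
          · exact hmax x hx hne
        · refine ⟨a, Finset.mem_insert_self a s, ?_⟩
          intro x hx hne
          rcases Finset.mem_insert.mp hx with rfl | hx
          · exact absurd rfl hne
          · by_cases hxm : x = m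
            · exact hxm ▸ h
            · exact htrans (hmax x hx hxm) h

/-- strict "lex from the top" order on monomials of the same degree -/
def lexlt (m m' : Mon) : Prop := ∃ x, m x < m' x ∧ ∀ y, vlt x y → m y = m' y

lemma lexlt_total {m m' : Mon} (h : m ≠ m') : lexlt m m' ∨ lexlt m' m := by
  classical
  have hne : ∃ x, m x ≠ m' x := by
    by_contra hc
    push_neg at hc
    exact h (Finsupp.ext hc)
  set D : Finset (ℕ × Bool) := (m.support ∪ m'.support).filter (fun x => m x ≠ m' x) with hD
  have hDne : D.Nonempty := by
    obtain ⟨x, hx⟩ := hne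
    refine ⟨x, Finset.mem_filter.mpr ⟨?_, hx⟩⟩
    rcases Nat.eq_zero_or_pos (m x) with h0 | h0
    · refine Finset.mem_union_right _ (Finsupp.mem_support_iff.mpr ?_)
      omega
    · exact Finset.mem_union_left _ (Finsupp.mem_support_iff.mpr (by omega))
  obtain ⟨x, hxD, hmax⟩ := exists_rel_max vlt (fun h1 h2 => vlt_trans h1 h2) (fun _ _ h => vlt_total h) D hDne
  have hxne : m x ≠ m' x := (Finset.mem_filter.mp hxD).2
  have hagree : ∀ y, vlt x y → m y = m' y := by
    intro y hy
    by_contra hc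
    have hyD : y ∈ D := by
      refine Finset.mem_filter.mpr ⟨?_, hc⟩
      rcases Nat.eq_zero_or_pos (m y) with h0 | h0
      · exact Finset.mem_union_right _ (Finsupp.mem_support_iff.mpr (by omega))
      · exact Finset.mem_union_left _ (Finsupp.mem_support_iff.mpr (by omega))
    have : y ≠ x := fun he => vlt_irrefl x (he ▸ hy)
    exact vlt_irrefl x (vlt_trans hy (hmax y hyD this))
  rcases lt_or_gt_of_ne hxne with hlt | hlt
  · exact Or.inl ⟨x, hlt, hagree⟩
  · exact Or.inr ⟨x, hlt, fun y hy => (hagree y hy).symm⟩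

lemma lexlt_trans {m m' m'' : Mon} (h1 : lexlt m m') (h2 : lexlt m' m'') : lexlt m m'' := by
  obtain ⟨x₁, hx₁, ha₁⟩ := h1
  obtain ⟨x₂, hx₂, ha₂⟩ := h2
  by_cases he : x₁ = x₂
  · subst he
    exact ⟨x₁, hx₁.trans hx₂, fun y hy => (ha₁ y hy).trans (ha₂ y hy)⟩
  · rcases vlt_total he with h | h
    · refine ⟨x₂, ?_, fun y hy => (ha₁ y (vlt_trans h hy)).trans (ha₂ y hy)⟩
      rw [ha₁ x₂ h]; exact hx₂
    · refine ⟨x₁, ?_, fun y hy => (ha₁ y hy).trans (ha₂ y (vlt_trans h hy))⟩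
      rw [← ha₂ x₁ h]; exact hx₁

lemma lexlt_irrefl (m : Mon) : ¬ lexlt m m := by
  rintro ⟨x, hx, -⟩; exact absurd hx (lt_irrefl _)

/-- the term order : degree first, then lex from the top -/
def tlt (m m' : Mon) : Prop := mdeg m < mdeg m' ∨ (mdeg m = mdeg m' ∧ lexlt m m')

lemma tlt_trans {m m' m'' : Mon} (h1 : tlt m m') (h2 : tlt m' m'') : tlt m m'' := by
  rcases h1 with h1 | ⟨h1, h1'⟩ <;> rcases h2 with h2 | ⟨h2, h2'⟩
  · exact Or.inl (h1.trans h2)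
  · exact Or.inl (h2 ▸ h1)
  · exact Or.inl (h1 ▸ h2)
  · exact Or.inr ⟨h1.trans h2, lexlt_trans h1' h2'⟩

lemma tlt_irrefl (m : Mon) : ¬ tlt m m := by
  rintro (h | ⟨-, h⟩)
  · exact absurd h (lt_irrefl _)
  · exact lexlt_irrefl m h

lemma tlt_total {m m' : Mon} (h : m ≠ m') : tlt m m' ∨ tlt m' m := by
  rcases lt_trichotomy (mdeg m) (mdeg m') with h1 | h1 | h1
  · exact Or.inl (Or.inl h1)
  · rcases lexlt_total h with h2 | h2
    · exact Or.inl (Or.inr ⟨h1, h2⟩)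
    · exact Or.inr (Or.inr ⟨h1.symm, h2⟩)
  · exact Or.inr (Or.inl h1)

lemma tlt_add_right {m m' : Mon} (k : Mon) (h : tlt m m') : tlt (m + k) (m' + k) := by
  rcases h with h | ⟨h, x, hx, ha⟩
  · exact Or.inl (by rw [mdeg_add, mdeg_add]; omega)
  · refine Or.inr ⟨by rw [mdeg_add, mdeg_add, h], x, ?_, fun y hy => ?_⟩
    · simp only [Finsupp.add_apply]; omega
    · simp only [Finsupp.add_apply, ha y hy]

lemma tlt_add_left {m m' : Mon} (k : Mon) (h : tlt m m') : tlt (k + m) (k + m') := by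
  rw [add_comm k m, add_comm k m']; exact tlt_add_right k h

lemma tlt_mapDomain {π : ℕ → ℕ} (hπ : StrictMono π) {m m' : Mon} (h : tlt m m') :
    tlt (Finsupp.mapDomain (vmap π) m) (Finsupp.mapDomain (vmap π) m') := by
  classical
  have hinj := vmap_injective hπ
  rcases h with h | ⟨h, x, hx, ha⟩
  · exact Or.inl (by rw [mdeg_mapDomain hπ, mdeg_mapDomain hπ]; exact h)
  · refine Or.inr ⟨by rw [mdeg_mapDomain hπ, mdeg_mapDomain hπ]; exact h, vmap π x, ?_, ?_⟩
    · rw [Finsupp.mapDomain_apply hinj, Finsupp.mapDomain_apply hinj]; exact hx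
    · intro y hy
      by_cases hyr : y ∈ Set.range (vmap π)
      · obtain ⟨z, rfl⟩ := hyr
        rw [Finsupp.mapDomain_apply hinj, Finsupp.mapDomain_apply hinj]
        exact ha z ((vlt_vmap_iff hπ).mp hy)
      · rw [Finsupp.mapDomain_notin_range _ _ hyr, Finsupp.mapDomain_notin_range _ _ hyr]

/-- bound on the support of a monomial -/
def suppBd (m : Mon) : ℕ := m.support.sup Prod.fst

lemma suppBd_spec {m : Mon} {x : ℕ × Bool} (hx : x ∈ m.support) : x.1 ≤ suppBd m :=
  Finset.le_sup (f := Prod.fst) hx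

lemma apply_eq_zero_of_gt_suppBd {m : Mon} {x : ℕ × Bool} (hx : suppBd m < x.1) : m x = 0 := by
  by_contra hc
  exact absurd (suppBd_spec (Finsupp.mem_support_iff.mpr hc)) (by omega)

lemma suppBd_le_of_tlt {m m' : Mon} (h : lexlt m' m) : suppBd m' ≤ suppBd m := by
  obtain ⟨x, hx, ha⟩ := h
  have hxm : x ∈ m.support := Finsupp.mem_support_iff.mpr (by omega)
  apply Finset.sup_le
  intro y hy
  by_cases hvy : vlt x y
  · have : m y ≠ 0 := by rw [← ha y hvy]; exact Finsupp.mem_support_iff.mp hy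
    exact suppBd_spec (Finsupp.mem_support_iff.mpr this)
  · have : y.1 ≤ x.1 := by
      by_contra hc
      exact hvy (Or.inl (by omega))
    exact le_trans this (suppBd_spec hxm)


/-- finiteness of monomials of bounded degree and support -/
lemma finite_bounded (d B : ℕ) : {m : Mon | mdeg m = d ∧ suppBd m ≤ B}.Finite := by
  classical
  rw [← Set.finite_coe_iff]
  set T := (Finset.range (B + 1) ×ˢ (Finset.univ : Finset Bool)) with hT
  have hval : ∀ (m : Mon), mdeg m = d → ∀ x, m x ≤ d := fun m hd x => hd ▸ single_le_mdeg m x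
  set Φ : {m : Mon | mdeg m = d ∧ suppBd m ≤ B} → (T → Fin (d+1)) :=
    fun m x => ⟨m.1 x.1, Nat.lt_succ_of_le (hval m.1 m.2.1 x.1)⟩ with hΦdef
  have hΦ : Function.Injective Φ := by
    rintro ⟨m, hm⟩ ⟨m', hm'⟩ h
    ext x
    by_cases hx : x ∈ T
    · have := congrFun h ⟨x, hx⟩
      simpa [hΦdef, Fin.ext_iff] using this
    · have hx1 : B < x.1 := by
        by_contra hc
        exact hx (Finset.mem_product.mpr ⟨Finset.mem_range.mpr (by omega), Finset.mem_univ _⟩)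
      rw [apply_eq_zero_of_gt_suppBd (lt_of_le_of_lt hm.2 hx1),
        apply_eq_zero_of_gt_suppBd (lt_of_le_of_lt hm'.2 hx1)]
  exact Finite.of_injective Φ hΦ

lemma acc_aux : ∀ (n d : ℕ) (m : Mon), mdeg m = d →
    (∀ m' : Mon, mdeg m' < d → Acc tlt m') →
    ({x : Mon | mdeg x = d ∧ suppBd x ≤ suppBd m ∧ tlt x m}.ncard) = n → Acc tlt m := by
  intro n
  induction n using Nat.strong_induction_on with
  | _ n IH =>
    intro d m hd hlow hcard
    constructor
    intro y hy
    have hBelowFin : {x : Mon | mdeg x = d ∧ suppBd x ≤ suppBd m ∧ tlt x m}.Finite :=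
      (finite_bounded d (suppBd m)).subset (fun x hx => ⟨hx.1, hx.2.1⟩)
    rcases hy with hlt | ⟨heq, hlex⟩
    · exact hlow y (hd ▸ hlt)
    · have hyd : mdeg y = d := heq.trans hd
      have hbd : suppBd y ≤ suppBd m := suppBd_le_of_tlt hlex
      have hss : {x : Mon | mdeg x = d ∧ suppBd x ≤ suppBd y ∧ tlt x y} ⊂
          {x : Mon | mdeg x = d ∧ suppBd x ≤ suppBd m ∧ tlt x m} := by
        constructor
        · rintro x ⟨h1, h2, h3⟩
          exact ⟨h1, h2.trans hbd, tlt_trans h3 (Or.inr ⟨heq, hlex⟩)⟩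
        · intro hc
          have : y ∈ {x : Mon | mdeg x = d ∧ suppBd x ≤ suppBd y ∧ tlt x y} :=
            hc ⟨hyd, hbd, Or.inr ⟨heq, hlex⟩⟩
          exact tlt_irrefl y this.2.2
      have hcardlt : {x : Mon | mdeg x = d ∧ suppBd x ≤ suppBd y ∧ tlt x y}.ncard < n :=
        hcard ▸ Set.ncard_lt_ncard hss hBelowFin
      exact IH _ hcardlt d y hyd hlow rfl

lemma tlt_wf : WellFounded (tlt) := by
  constructor
  have main : ∀ (d : ℕ) (m : Mon), mdeg m = d → Acc tlt m := by
    intro d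
    induction d using Nat.strong_induction_on with
    | _ d IH =>
      intro m hd
      exact acc_aux _ d m hd (fun m' hm' => IH _ (hd ▸ hm') m' rfl) rfl
  exact fun m => main _ m rfl

/-! ### Leading monomials -/

/-- the leading monomial of a polynomial (junk value `0` for the zero polynomial) -/
def lmon (f : RR K) : Mon :=
  if h : f.support.Nonempty then
    (exists_rel_max tlt (fun a b => tlt_trans a b) (fun _ _ h => tlt_total h) f.support h).choose
  else 0

lemma lmon_spec {f : RR K} (hf : f ≠ 0) :
    lmon f ∈ f.support ∧ ∀ x ∈ f.support, x ≠ lmon f → tlt x (lmon f) := by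
  have h : f.support.Nonempty := by
    exact MvPolynomial.support_nonempty.mpr hf
  rw [lmon, dif_pos h]
  obtain ⟨h1, h2⟩ :=
    (exists_rel_max tlt (fun a b => tlt_trans a b) (fun _ _ h => tlt_total h)
      f.support h).choose_spec
  exact ⟨h1, h2⟩

lemma lmon_coeff_ne_zero {f : RR K} (hf : f ≠ 0) : MvPolynomial.coeff (lmon f) f ≠ 0 :=
  MvPolynomial.mem_support_iff.mp (lmon_spec hf).1

lemma tlt_lmon_of_mem {f : RR K} (hf : f ≠ 0) {x : Mon} (hx : x ∈ f.support)
    (hne : x ≠ lmon f) : tlt x (lmon f) := (lmon_spec hf).2 x hx hne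

/-! ### the partial well order -/

/-- `m` divides `m'` after an increasing renaming of the variables -/
def mprec (m m' : Mon) : Prop :=
  ∃ π : ℕ → ℕ, StrictMono π ∧ ∀ x, Finsupp.mapDomain (vmap π) m x ≤ m' x

/-- word encoding of a monomial -/
def wordOf (m : Mon) : List (ℕ × ℕ) :=
  (List.range (suppBd m + 1)).map fun i => (m (i, false), m (i, true))

lemma mprec_of_sublistForall₂ {m m' : Mon}
    (h : List.SublistForall₂ (· ≤ ·) (wordOf m) (wordOf m')) : mprec m m' := by
  classical
  obtain ⟨l, hfa, hsub⟩ := List.sublistForall₂_iff.mp h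
  obtain ⟨e, he⟩ := List.sublist_iff_exists_fin_orderEmbedding_get_eq.mp hsub
  have hlen : (wordOf m).length = l.length := hfa.length_eq
  have hlen1 : (wordOf m).length = suppBd m + 1 := by simp [wordOf]
  have hlen2 : (wordOf m').length = suppBd m' + 1 := by simp [wordOf]
  -- the strictly monotone map
  set E : ℕ → ℕ := fun i => if h : i < l.length then (e ⟨i, h⟩ : ℕ) else i + (wordOf m').length with hE
  have hElt : ∀ (i : ℕ) (h : i < l.length), E i < (wordOf m').length := by
    intro i h
    rw [hE]; simp only [dif_pos h]
    exact (e ⟨i, h⟩).2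
  have hEmono : StrictMono E := by
    intro i j hij
    by_cases hj : j < l.length
    · have hi : i < l.length := hij.trans hj
      rw [hE]; simp only [dif_pos hi, dif_pos hj]
      exact_mod_cast e.strictMono (by exact_mod_cast hij)
    · by_cases hi : i < l.length
      · rw [hE]; simp only [dif_pos hi, dif_neg hj]
        have := (e ⟨i, hi⟩).2
        omega
      · rw [hE]; simp only [dif_neg hi, dif_neg hj]
        omega
  refine ⟨E, hEmono, ?_⟩
  intro x
  by_cases hxr : x ∈ Set.range (vmap E)
  · obtain ⟨⟨i, b⟩, rfl⟩ := hxr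
    rw [Finsupp.mapDomain_apply (vmap_injective hEmono)]
    by_cases hi : i < l.length
    · -- use the pointwise comparison
      have hget := List.forall₂_iff_get.mp hfa
      have hi1 : i < (wordOf m).length := by omega
      have hcmp := hget.2 i hi1 hi
      have hgl : l.get ⟨i, hi⟩ = (wordOf m').get (e ⟨i, hi⟩) := he ⟨i, hi⟩
      have hwm : (wordOf m).get ⟨i, hi1⟩ = (m (i, false), m (i, true)) := by
        simp [wordOf, List.get_eq_getElem]
      have hEi : E i = (e ⟨i, hi⟩ : ℕ) := by rw [hE]; simp [dif_pos hi]
      have hwm' : (wordOf m').get (e ⟨i, hi⟩) = (m' (E i, false), m' (E i, true)) := by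
        simp only [wordOf, List.get_eq_getElem, List.getElem_map, List.getElem_range]
        rw [hEi]
        exact rfl
      rw [hwm, hgl, hwm'] at hcmp
      obtain ⟨h1, h2⟩ := Prod.le_def.mp hcmp
      cases b
      · simpa [vmap] using h1
      · simpa [vmap] using h2
    · -- beyond the support bound, m is zero
      have : suppBd m < i := by omega
      rw [apply_eq_zero_of_gt_suppBd this]
      exact Nat.zero_le _
  · rw [Finsupp.mapDomain_notin_range _ _ hxr]
    exact Nat.zero_le _

lemma mprec_pwo (f : ℕ → Mon) : ∃ i j, i < j ∧ mprec (f i) (f j) := by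
  classical
  have hN : (Set.univ : Set ℕ).IsPWO := (Set.isWF_univ_iff.mpr inferInstance).isPWO
  have hNN : (Set.univ : Set (ℕ × ℕ)).IsPWO := by
    have := hN.prod hN
    rwa [Set.univ_prod_univ] at this
  have hHig := Set.PartiallyWellOrderedOn.partiallyWellOrderedOn_sublistForall₂
    (r := ((· ≤ ·) : ℕ × ℕ → ℕ × ℕ → Prop)) hNN
  obtain ⟨i, j, hij, hrel⟩ := hHig.exists_lt (f := fun n => wordOf (f n)) (fun n x _ => Set.mem_univ x)
  exact ⟨i, j, hij, mprec_of_sublistForall₂ hrel⟩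

/-- from a pwo, every set has a finite cofinal-below subset -/
lemma exists_finite_basis (L : Set Mon) :
    ∃ F : Finset Mon, ↑F ⊆ L ∧ ∀ x ∈ L, ∃ y ∈ F, mprec y x := by
  classical
  by_contra hc
  push_neg at hc
  have pick : ∀ F : Finset Mon, ↑F ⊆ L → ∃ x, x ∈ L ∧ ∀ y ∈ F, ¬ mprec y x := by
    intro F hF
    obtain ⟨x, hx, hx2⟩ := hc F hF
    exact ⟨x, hx, fun y hy hp => hx2 y hy hp⟩
  set T : ℕ → {F : Finset Mon // ↑F ⊆ L} := fun n => Nat.rec ⟨∅, by simp⟩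
    (fun _ p => ⟨insert (pick p.1 p.2).choose p.1, by
      rw [Finset.coe_insert]
      exact Set.insert_subset (pick p.1 p.2).choose_spec.1 p.2⟩) n with hT
  set x : ℕ → Mon := fun n => (pick (T n).1 (T n).2).choose with hx
  have hxL : ∀ n, x n ∈ L := fun n => (pick (T n).1 (T n).2).choose_spec.1
  have hxmem : ∀ n, x n ∈ (T (n+1)).1 := fun n => Finset.mem_insert_self _ _
  have hmono : ∀ a b, a ≤ b → (T a).1 ⊆ (T b).1 := by
    intro a b hab
    induction b, hab using Nat.le_induction with
    | base => exact Finset.Subset.refl _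
    | succ b hab ih => exact ih.trans (Finset.subset_insert _ _)
  have hbad : ∀ i j, i < j → ¬ mprec (x i) (x j) := by
    intro i j hij
    have hmem : x i ∈ (T j).1 := hmono (i+1) j hij (hxmem i)
    exact (pick (T j).1 (T j).2).choose_spec.2 (x i) hmem
  obtain ⟨i, j, hij, hp⟩ := mprec_pwo x
  exact hbad i j hij hp

/-! ### the Noetherianity argument -/

/-- the generating set of monomial multiples of increasing renamings of elements of `B` -/
def Qset (B : Set (RR K)) : Set (RR K) :=
  {q | ∃ b ∈ B, ∃ π : ℕ → ℕ, StrictMono π ∧ ∃ δ : Mon,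
    q = (MvPolynomial.monomial δ (1 : K)) * MvPolynomial.rename (vmap π) b}

lemma rename_ne_zero {f : RR K} (hf : f ≠ 0) {π : ℕ → ℕ} (hπ : StrictMono π) :
    MvPolynomial.rename (vmap π) f ≠ 0 := by
  intro hc
  apply hf
  have := MvPolynomial.coeff_rename_mapDomain (vmap π) (vmap_injective hπ) f (lmon f)
  rw [hc] at this
  simp only [MvPolynomial.coeff_zero] at this
  exact absurd this.symm (lmon_coeff_ne_zero hf)

lemma lmon_rename {f : RR K} (hf : f ≠ 0) {π : ℕ → ℕ} (hπ : StrictMono π) :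
    lmon (MvPolynomial.rename (vmap π) f) = Finsupp.mapDomain (vmap π) (lmon f) := by
  classical
  have hne := rename_ne_zero hf hπ
  have hsupp : (MvPolynomial.rename (vmap π) f).support
      = Finset.image (Finsupp.mapDomain (vmap π)) f.support :=
    MvPolynomial.support_rename_of_injective (vmap_injective hπ)
  have hmem : Finsupp.mapDomain (vmap π) (lmon f) ∈ (MvPolynomial.rename (vmap π) f).support := by
    rw [hsupp]
    exact Finset.mem_image_of_mem _ (lmon_spec hf).1
  by_contra hc
  have h1 := tlt_lmon_of_mem hne hmem (fun he => hc he.symm)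
  have h2 := (lmon_spec hne).1
  rw [hsupp] at h2
  obtain ⟨z, hz, hze⟩ := Finset.mem_image.mp h2
  by_cases hzl : z = lmon f
  · rw [hzl] at hze
    exact tlt_irrefl _ (hze ▸ h1)
  · have := tlt_mapDomain hπ (tlt_lmon_of_mem hf hz hzl)
    rw [hze] at this
    exact tlt_irrefl _ (tlt_trans h1 this)

theorem noetherian_step (I : Submodule K (RR K))
    (hinc : ∀ (π : ℕ → ℕ), StrictMono π → ∀ f ∈ I, MvPolynomial.rename (vmap π) f ∈ I)
    (hmon : ∀ (δ : Mon), ∀ f ∈ I, (MvPolynomial.monomial δ (1 : K)) * f ∈ I) :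
    ∃ B : Finset (RR K), ↑B ⊆ (I : Set (RR K)) ∧
      (I : Set (RR K)) ⊆ (Submodule.span K (Qset (↑B : Set (RR K))) : Set (RR K)) := by
  classical
  -- pick a finite basis of leading monomials
  obtain ⟨F₀, hF₀L, hF₀⟩ := exists_finite_basis {m | ∃ f ∈ I, f ≠ 0 ∧ lmon f = m}
  have hchoose : ∀ m : Mon, m ∈ F₀ → ∃ f, f ∈ I ∧ f ≠ 0 ∧ lmon f = m := by
    intro m hm
    obtain ⟨f, hf1, hf2, hf3⟩ := hF₀L hm
    exact ⟨f, hf1, hf2, hf3⟩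
  set B : Finset (RR K) := F₀.attach.image (fun m => (hchoose m.1 m.2).choose) with hB
  have hBI : ↑B ⊆ (I : Set (RR K)) := by
    intro b hb
    simp only [hB, Finset.coe_image, Set.mem_image] at hb
    obtain ⟨m, _, rfl⟩ := hb
    exact (hchoose m.1 m.2).choose_spec.1
  refine ⟨B, hBI, ?_⟩
  -- main induction on the leading monomial
  have main : ∀ m : Mon, ∀ f ∈ I, f ≠ 0 → lmon f = m →
      f ∈ Submodule.span K (Qset (↑B : Set (RR K))) := by
    intro m
    induction m using (tlt_wf).induction with
    | _ m IH =>
      intro f hfI hf0 hflm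
      -- find a basis element whose leading monomial precedes `lmon f`
      obtain ⟨m₀, hm₀F, hm₀p⟩ := hF₀ (lmon f) ⟨f, hfI, hf0, rfl⟩
      set b : RR K := (hchoose m₀ hm₀F).choose with hbdef
      obtain ⟨hbI, hb0, hblm⟩ := (hchoose m₀ hm₀F).choose_spec
      have hbB : b ∈ B := by
        simp only [hB, Finset.mem_image]
        exact ⟨⟨m₀, hm₀F⟩, Finset.mem_attach _ _, rfl⟩
      obtain ⟨π, hπ, hle⟩ := hm₀p
      rw [← hblm] at hle
      -- the renamed polynomial and its leading data
      set q : RR K := MvPolynomial.rename (vmap π) b with hq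
      have hq0 : q ≠ 0 := rename_ne_zero hb0 hπ
      have hqlm : lmon q = Finsupp.mapDomain (vmap π) (lmon b) := lmon_rename hb0 hπ
      have hlem : lmon q ≤ lmon f := by
        rw [hqlm, Finsupp.le_def]
        exact hle
      set δ : Mon := lmon f - lmon q with hδ
      have hδq : δ + lmon q = lmon f := by
        rw [hδ, tsub_add_cancel_of_le hlem]
      set q2 : RR K := (MvPolynomial.monomial δ (1 : K)) * q with hq2
      have hq2c : MvPolynomial.coeff (lmon f) q2 = MvPolynomial.coeff (lmon q) q := by
        rw [hq2, ← hδq, MvPolynomial.coeff_monomial_mul, one_mul]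
      have hqc : MvPolynomial.coeff (lmon q) q = MvPolynomial.coeff (lmon b) b := by
        rw [hq, hqlm]
        exact MvPolynomial.coeff_rename_mapDomain _ (vmap_injective hπ) b (lmon b)
      have hqcne : MvPolynomial.coeff (lmon q) q ≠ 0 := lmon_coeff_ne_zero hq0
      -- support of q2 is dominated by lmon f
      have hq2supp : ∀ x ∈ q2.support, x = lmon f ∨ tlt x (lmon f) := by
        intro x hx
        have := MvPolynomial.support_mul _ _ hx
        obtain ⟨y, hy, z, hz, hyz⟩ := Finset.mem_add.mp this
        have hy' : y = δ := by
          have := MvPolynomial.support_monomial (a := (1:K)) (s := δ) ▸ hy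
          simpa [one_ne_zero] using this
        subst hy'
        by_cases hzq : z = lmon q
        · left; rw [← hyz, hzq, hδq]
        · right
          rw [← hyz, ← hδq]
          exact tlt_add_left δ (tlt_lmon_of_mem hq0 hz hzq)
      -- the reduced polynomial
      set c : K := MvPolynomial.coeff (lmon f) f / MvPolynomial.coeff (lmon q) q with hc
      set f' : RR K := f - c • q2 with hf'
      have hq2I : q2 ∈ I := hmon δ q (hinc π hπ b hbI)
      have hf'I : f' ∈ I := Submodule.sub_mem I hfI (Submodule.smul_mem I c hq2I)
      have hf'c : MvPolynomial.coeff (lmon f) f' = 0 := by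
        rw [hf']
        simp only [MvPolynomial.coeff_sub, MvPolynomial.coeff_smul, smul_eq_mul]
        rw [hq2c, hc, div_mul_cancel₀ _ hqcne, sub_self]
      have hf'supp : ∀ x ∈ f'.support, tlt x (lmon f) := by
        intro x hx
        have hxne : x ≠ lmon f := by
          intro hc'
          rw [hc'] at hx
          exact (MvPolynomial.mem_support_iff.mp hx) hf'c
        have : MvPolynomial.coeff x f' ≠ 0 := MvPolynomial.mem_support_iff.mp hx
        rw [hf'] at this
        simp only [MvPolynomial.coeff_sub, MvPolynomial.coeff_smul, smul_eq_mul] at this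
        by_cases hxf : x ∈ f.support
        · exact tlt_lmon_of_mem hf0 hxf hxne
        · have hxq2 : x ∈ q2.support := by
            rw [MvPolynomial.notMem_support_iff] at hxf
            rw [hxf, zero_sub, neg_ne_zero] at this
            rw [MvPolynomial.mem_support_iff]
            intro hc'
            rw [hc'] at this
            simp at this
          rcases hq2supp x hxq2 with h | h
          · exact absurd h hxne
          · exact h
      have hq2span : q2 ∈ Submodule.span K (Qset (↑B : Set (RR K))) := by
        apply Submodule.subset_span
        exact ⟨b, hbB, π, hπ, δ, rfl⟩
      have hfsplit : f = f' + c • q2 := by rw [hf']; ring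
      rw [hfsplit]
      apply Submodule.add_mem
      · by_cases hf'0 : f' = 0
        · rw [hf'0]; exact Submodule.zero_mem _
        · have hlt : tlt (lmon f') (lmon f) := hf'supp _ (lmon_spec hf'0).1
          exact IH (lmon f') (hflm ▸ hlt) f' hf'I hf'0 rfl
      · exact Submodule.smul_mem _ c hq2span
  intro f hfI
  by_cases hf0 : f = 0
  · rw [hf0]; exact Submodule.zero_mem _
  · exact main (lmon f) f hfI hf0 rfl

end PartB

/-! ## Part A : evaluation of type polynomials in `UT₃⁽⁻⁾` -/

noncomputable section PartA

open MvPolynomial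

variable {K : Type*} [Field K] {G : Type*} [CommGroup G]

attribute [local instance 100] LieRing.ofAssociativeRing

lemma gne1 {g : G} (hg : g ^ 2 ≠ 1) : g ≠ 1 := fun h => hg (by rw [h, one_pow])

lemma gnei {g : G} (hg : g ^ 2 ≠ 1) : g ≠ g⁻¹ := by
  intro h
  apply hg
  rw [pow_two]
  nth_rewrite 2 [h]
  exact mul_inv_cancel g

lemma ginv1 {g : G} (hg : g ^ 2 ≠ 1) : g⁻¹ ≠ 1 := by
  intro h
  exact gne1 hg (by rwa [inv_eq_one] at h)

/-- admissible (grading-respecting) evaluations -/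
def Adm (g : G) (ψ : FL K G →ₗ⁅K⁆ M3 K) : Prop :=
  ∀ (i : ℕ) (l : G), ψ (of K (i, l)) ∈ utGrading K G g g⁻¹ l

/-- the `u`-coordinates of an evaluation -/
def uE (ψ : FL K G →ₗ⁅K⁆ M3 K) (i : ℕ) : K :=
  ψ (of K (i, (1 : G))) 1 1 - ψ (of K (i, (1 : G))) 0 0

/-- the `v`-coordinates of an evaluation -/
def vE (ψ : FL K G →ₗ⁅K⁆ M3 K) (i : ℕ) : K :=
  ψ (of K (i, (1 : G))) 2 2 - ψ (of K (i, (1 : G))) 1 1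

/-- the `x_g`-coordinate of an evaluation -/
def aE (ψ : FL K G →ₗ⁅K⁆ M3 K) (g : G) : K := ψ (of K (0, g)) 0 1

/-- the `x_{g⁻¹}`-coordinate of an evaluation -/
def cE (ψ : FL K G →ₗ⁅K⁆ M3 K) (g : G) : K := ψ (of K (0, g⁻¹)) 1 2

/-- all coordinates, as a valuation of the polynomial variables -/
def wE (ψ : FL K G →ₗ⁅K⁆ M3 K) : ℕ × Bool → K :=
  fun x => bif x.2 then vE ψ x.1 else uE ψ x.1

@[simp] lemma wE_false (ψ : FL K G →ₗ⁅K⁆ M3 K) (i : ℕ) : wE ψ (i, false) = uE ψ i := rfl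

@[simp] lemma wE_true (ψ : FL K G →ₗ⁅K⁆ M3 K) (i : ℕ) : wE ψ (i, true) = vE ψ i := rfl

/-- the matrix bracket with `e₁₂` on the degree `1` component -/
lemma lie_E01 {g : G} (hg : g ^ 2 ≠ 1) {N : M3 K}
    (h : N ∈ utGrading K G g g⁻¹ (1 : G)) :
    ⁅E3 K 0 1, N⁆ = (N 1 1 - N 0 0) • E3 K 0 1 := by
  induction h using Submodule.span_induction with
  | mem m hm =>
    rcases hm with ⟨-, rfl | rfl | rfl⟩ | ⟨h1, rfl⟩ | ⟨h1, rfl⟩ | ⟨-, rfl⟩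
    · ext a b
      fin_cases a <;> fin_cases b <;>
        simp [E3, Ring.lie_def, Matrix.single, Matrix.sub_apply, Matrix.mul_apply,
          Fin.sum_univ_three, Matrix.smul_apply, Matrix.of_apply, smul_eq_mul]
    · ext a b
      fin_cases a <;> fin_cases b <;>
        simp [E3, Ring.lie_def, Matrix.single, Matrix.sub_apply, Matrix.mul_apply,
          Fin.sum_univ_three, Matrix.smul_apply, Matrix.of_apply, smul_eq_mul]
    · ext a b
      fin_cases a <;> fin_cases b <;>
        simp [E3, Ring.lie_def, Matrix.single, Matrix.sub_apply, Matrix.mul_apply,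
          Fin.sum_univ_three, Matrix.smul_apply, Matrix.of_apply, smul_eq_mul]
    · exact absurd h1.symm (gne1 hg)
    · exact absurd h1.symm (ginv1 hg)
    · ext a b
      fin_cases a <;> fin_cases b <;>
        simp [E3, Ring.lie_def, Matrix.single, Matrix.sub_apply, Matrix.mul_apply,
          Fin.sum_univ_three, Matrix.smul_apply, Matrix.of_apply, smul_eq_mul]
  | zero => simp
  | add x y hx hy ihx ihy =>
    rw [lie_add, ihx, ihy]
    rw [show (x + y) 1 1 - (x + y) 0 0 = (x 1 1 - x 0 0) + (y 1 1 - y 0 0) by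
      simp [Matrix.add_apply]; ring, add_smul]
  | smul c x hx ihx =>
    rw [lie_smul, ihx, smul_smul]
    rw [show (c • x) 1 1 - (c • x) 0 0 = c * (x 1 1 - x 0 0) by
      simp [Matrix.smul_apply]; ring]

/-- the matrix bracket with `e₂₃` on the degree `1` component -/
lemma lie_E12 {g : G} (hg : g ^ 2 ≠ 1) {N : M3 K}
    (h : N ∈ utGrading K G g g⁻¹ (1 : G)) :
    ⁅E3 K 1 2, N⁆ = (N 2 2 - N 1 1) • E3 K 1 2 := by
  induction h using Submodule.span_induction with
  | mem m hm =>
    rcases hm with ⟨-, rfl | rfl | rfl⟩ | ⟨h1, rfl⟩ | ⟨h1, rfl⟩ | ⟨-, rfl⟩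
    · ext a b
      fin_cases a <;> fin_cases b <;>
        simp [E3, Ring.lie_def, Matrix.single, Matrix.sub_apply, Matrix.mul_apply,
          Fin.sum_univ_three, Matrix.smul_apply, Matrix.of_apply, smul_eq_mul]
    · ext a b
      fin_cases a <;> fin_cases b <;>
        simp [E3, Ring.lie_def, Matrix.single, Matrix.sub_apply, Matrix.mul_apply,
          Fin.sum_univ_three, Matrix.smul_apply, Matrix.of_apply, smul_eq_mul]
    · ext a b
      fin_cases a <;> fin_cases b <;>
        simp [E3, Ring.lie_def, Matrix.single, Matrix.sub_apply, Matrix.mul_apply,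
          Fin.sum_univ_three, Matrix.smul_apply, Matrix.of_apply, smul_eq_mul]
    · exact absurd h1.symm (gne1 hg)
    · exact absurd h1.symm (ginv1 hg)
    · ext a b
      fin_cases a <;> fin_cases b <;>
        simp [E3, Ring.lie_def, Matrix.single, Matrix.sub_apply, Matrix.mul_apply,
          Fin.sum_univ_three, Matrix.smul_apply, Matrix.of_apply, smul_eq_mul]
  | zero => simp
  | add x y hx hy ihx ihy =>
    rw [lie_add, ihx, ihy]
    rw [show (x + y) 2 2 - (x + y) 1 1 = (x 2 2 - x 1 1) + (y 2 2 - y 1 1) by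
      simp [Matrix.add_apply]; ring, add_smul]
  | smul c x hx ihx =>
    rw [lie_smul, ihx, smul_smul]
    rw [show (c • x) 2 2 - (c • x) 1 1 = c * (x 2 2 - x 1 1) by
      simp [Matrix.smul_apply]; ring]

lemma lieHom_map_sum {L M : Type*} [LieRing L] [LieAlgebra K L] [LieRing M] [LieAlgebra K M]
    (ψ : L →ₗ⁅K⁆ M) {n : ℕ} (f : Fin n → L) :
    ψ (∑ i, f i) = ∑ i, ψ (f i) := map_sum ψ.toLinearMap f Finset.univ

lemma lieHom_map_sub {L M : Type*} [LieRing L] [LieAlgebra K L] [LieRing M] [LieAlgebra K M]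
    (ψ : L →ₗ⁅K⁆ M) (a b : L) : ψ (a - b) = ψ a - ψ b := map_sub ψ.toLinearMap a b

lemma lie_smul_E01_E12 (α β : K) :
    ⁅α • E3 K 0 1, β • E3 K 1 2⁆ = (α * β) • E3 K 0 2 := by
  ext a b
  fin_cases a <;> fin_cases b <;>
    (simp [E3, Ring.lie_def, Matrix.single, Matrix.sub_apply, Matrix.mul_apply,
      Fin.sum_univ_three, Matrix.smul_apply, Matrix.of_apply, smul_eq_mul] <;> ring)

lemma lie_E01_E12 : ⁅E3 K 0 1, E3 K 1 2⁆ = E3 K 0 2 := by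
  ext a b
  fin_cases a <;> fin_cases b <;>
    simp [E3, Ring.lie_def, Matrix.single, Matrix.sub_apply, Matrix.mul_apply,
      Fin.sum_univ_three, Matrix.of_apply]

lemma psi_of_g {g : G} (hg : g ^ 2 ≠ 1) {ψ : FL K G →ₗ⁅K⁆ M3 K} (hψ : Adm g ψ) :
    ψ (of K (0, g)) = aE ψ g • E3 K 0 1 := by
  have h := hψ 0 g
  rw [utGrading] at h
  have hset : {m : M3 K |
      (g = 1 ∧ (m = E3 K 0 0 ∨ m = E3 K 1 1 ∨ m = E3 K 2 2)) ∨
      (g = g ∧ m = E3 K 0 1) ∨ (g = g⁻¹ ∧ m = E3 K 1 2) ∨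
      (g = g * g⁻¹ ∧ m = E3 K 0 2)} = {E3 K 0 1} := by
    ext m
    simp only [Set.mem_setOf_eq, Set.mem_singleton_iff]
    constructor
    · rintro (⟨h1, -⟩ | ⟨-, rfl⟩ | ⟨h1, -⟩ | ⟨h1, -⟩)
      · exact absurd h1 (gne1 hg)
      · rfl
      · exact absurd h1 (gnei hg)
      · rw [mul_inv_cancel] at h1; exact absurd h1 (gne1 hg)
    · rintro rfl
      tauto
  rw [hset] at h
  obtain ⟨a, ha⟩ := Submodule.mem_span_singleton.mp h
  rw [← ha, aE, ← ha]
  congr 1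
  show a = (a • E3 K 0 1) 0 1
  rw [Matrix.smul_apply, E3, Matrix.single_apply_same, smul_eq_mul, mul_one]

lemma psi_of_gi {g : G} (hg : g ^ 2 ≠ 1) {ψ : FL K G →ₗ⁅K⁆ M3 K} (hψ : Adm g ψ) :
    ψ (of K (0, g⁻¹)) = cE ψ g • E3 K 1 2 := by
  have h := hψ 0 g⁻¹
  rw [utGrading] at h
  have hset : {m : M3 K |
      (g⁻¹ = 1 ∧ (m = E3 K 0 0 ∨ m = E3 K 1 1 ∨ m = E3 K 2 2)) ∨
      (g⁻¹ = g ∧ m = E3 K 0 1) ∨ (g⁻¹ = g⁻¹ ∧ m = E3 K 1 2) ∨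
      (g⁻¹ = g * g⁻¹ ∧ m = E3 K 0 2)} = {E3 K 1 2} := by
    ext m
    simp only [Set.mem_setOf_eq, Set.mem_singleton_iff]
    constructor
    · rintro (⟨h1, -⟩ | ⟨h1, -⟩ | ⟨-, rfl⟩ | ⟨h1, -⟩)
      · exact absurd h1 (ginv1 hg)
      · exact absurd h1.symm (gnei hg)
      · rfl
      · rw [mul_inv_cancel] at h1; exact absurd h1 (ginv1 hg)
    · rintro rfl
      tauto
  rw [hset] at h
  obtain ⟨a, ha⟩ := Submodule.mem_span_singleton.mp h
  rw [← ha, cE, ← ha]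
  congr 1
  show a = (a • E3 K 1 2) 1 2
  rw [Matrix.smul_apply, E3, Matrix.single_apply_same, smul_eq_mul, mul_one]

lemma lnorm_cons (x y : FL K G) (l : List (FL K G)) :
    lnorm K G x (y :: l) = lnorm K G ⁅x, y⁆ l := rfl

lemma lnorm_nil (x : FL K G) : lnorm K G x [] = x := rfl

/-- evaluation of a left-normed commutator seeded in the degree `g` component -/
lemma eval_lnorm_u {g : G} (hg : g ^ 2 ≠ 1) {ψ : FL K G →ₗ⁅K⁆ M3 K} (hψ : Adm g ψ)
    (L : List ℕ) :
    ∀ (s : FL K G) (α : K), ψ s = α • E3 K 0 1 →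
      ψ (lnorm K G s (L.map fun n => of K (n, (1 : G)))) =
        (α * (L.map (uE ψ)).prod) • E3 K 0 1 := by
  induction L with
  | nil => intro s α hs; simpa [lnorm_nil] using hs
  | cons n L ih =>
    intro s α hs
    rw [List.map_cons, lnorm_cons]
    have hb : ψ ⁅s, of K (n, (1 : G))⁆ = (α * uE ψ n) • E3 K 0 1 := by
      rw [LieHom.map_lie, hs, smul_lie, lie_E01 hg (hψ n 1), smul_smul, uE]
    rw [ih _ _ hb, List.map_cons, List.prod_cons, mul_assoc]

/-- evaluation of a left-normed commutator seeded in the degree `g⁻¹` component -/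
lemma eval_lnorm_v {g : G} (hg : g ^ 2 ≠ 1) {ψ : FL K G →ₗ⁅K⁆ M3 K} (hψ : Adm g ψ)
    (L : List ℕ) :
    ∀ (s : FL K G) (α : K), ψ s = α • E3 K 1 2 →
      ψ (lnorm K G s (L.map fun n => of K (n, (1 : G)))) =
        (α * (L.map (vE ψ)).prod) • E3 K 1 2 := by
  induction L with
  | nil => intro s α hs; simpa [lnorm_nil] using hs
  | cons n L ih =>
    intro s α hs
    rw [List.map_cons, lnorm_cons]
    have hb : ψ ⁅s, of K (n, (1 : G))⁆ = (α * vE ψ n) • E3 K 1 2 := by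
      rw [LieHom.map_lie, hs, smul_lie, lie_E12 hg (hψ n 1), smul_smul, vE]
    rw [ih _ _ hb, List.map_cons, List.prod_cons, mul_assoc]

/-- index lists underlying `yRun` -/
def idxRun (p : ℕ → ℕ) : ℕ → List ℕ
  | 0 => []
  | n + 1 => idxRun p n ++ List.replicate (p n) n

lemma yRun_eq_map (p : ℕ → ℕ) (r : ℕ) :
    yRun K G p r = (idxRun p r).map (fun n => of K (n, (1 : G))) := by
  induction r with
  | zero => rfl
  | succ r ih => simp [yRun, idxRun, ih, List.map_append]

lemma idxRun_prod (u : ℕ → K) (p : ℕ → ℕ) (r : ℕ) :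
    ((idxRun p r).map u).prod = ∏ i ∈ Finset.range r, u i ^ p i := by
  induction r with
  | zero => rfl
  | succ r ih => simp [idxRun, ih, Finset.prod_range_succ, List.prod_replicate]

/-- evaluation of the basic commutators -/
lemma eval_monAU {g : G} (hg : g ^ 2 ≠ 1) {ψ : FL K G →ₗ⁅K⁆ M3 K} (hψ : Adm g ψ)
    (r : ℕ) (p q : ℕ → ℕ) :
    ψ (monAU K g r p q) =
      ((aE ψ g * ∏ i ∈ Finset.range r, uE ψ i ^ p i) *
        (cE ψ g * ∏ i ∈ Finset.range r, vE ψ i ^ q i)) • E3 K 0 2 := by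
  rw [monAU, LieHom.map_lie, yRun_eq_map, yRun_eq_map,
    eval_lnorm_u hg hψ _ _ _ (psi_of_g hg hψ), eval_lnorm_v hg hψ _ _ _ (psi_of_gi hg hψ),
    idxRun_prod, idxRun_prod, lie_smul_E01_E12]

/-- exponent vector of one summand -/
def expo (r : ℕ) (p q : ℕ → ℕ) : Mon :=
  ∑ i ∈ Finset.range r,
    (Finsupp.single ((i, false) : ℕ × Bool) (p i) + Finsupp.single ((i, true) : ℕ × Bool) (q i))

/-- the polynomial associated with the data of a type `(g,g⁻¹)` polynomial -/
def Ppoly (d : AUData K) : RR K :=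
  ∑ s : Fin d.t, MvPolynomial.C (d.α s) * MvPolynomial.monomial (expo d.r (d.p s) (d.q s)) 1

lemma expo_prod (w : ℕ × Bool → K) (r : ℕ) (p q : ℕ → ℕ) :
    (expo r p q).prod (fun x e => w x ^ e) =
      ∏ i ∈ Finset.range r, (w (i, false) ^ p i * w (i, true) ^ q i) := by
  induction r with
  | zero => simp [expo]
  | succ r ih =>
    have h1 : (Finsupp.single ((r, false) : ℕ × Bool) (p r)).prod (fun x e => w x ^ e)
        = w (r, false) ^ p r := Finsupp.prod_single_index (pow_zero _)
    have h2 : (Finsupp.single ((r, true) : ℕ × Bool) (q r)).prod (fun x e => w x ^ e)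
        = w (r, true) ^ q r := Finsupp.prod_single_index (pow_zero _)
    rw [expo, Finset.sum_range_succ, ← expo]
    rw [Finsupp.prod_add_index' (fun a => pow_zero _) (fun a b c => pow_add _ _ _)]
    rw [Finsupp.prod_add_index' (fun a => pow_zero _) (fun a b c => pow_add _ _ _)]
    rw [h1, h2, ih, Finset.prod_range_succ]

lemma eval_Ppoly (w : ℕ × Bool → K) (d : AUData K) :
    MvPolynomial.eval w (Ppoly d) =
      ∑ s : Fin d.t, d.α s *
        ∏ i ∈ Finset.range d.r, (w (i, false) ^ d.p s i * w (i, true) ^ d.q s i) := by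
  rw [Ppoly, map_sum]
  refine Finset.sum_congr rfl fun s _ => ?_
  rw [map_mul, MvPolynomial.eval_C, MvPolynomial.eval_monomial, one_mul, expo_prod]


/-- master formula : evaluation of a type polynomial -/
lemma eval_elem {g : G} (hg : g ^ 2 ≠ 1) {ψ : FL K G →ₗ⁅K⁆ M3 K} (hψ : Adm g ψ)
    (d : AUData K) :
    ψ (AUData.elem g d) =
      (aE ψ g * cE ψ g * MvPolynomial.eval (wE ψ) (Ppoly d)) • E3 K 0 2 := by
  rw [AUData.elem, lieHom_map_sum, eval_Ppoly, Finset.mul_sum, Finset.sum_smul]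
  refine Finset.sum_congr rfl fun s _ => ?_
  rw [map_smul ψ, eval_monAU hg hψ, smul_smul]
  congr 1
  rw [Finset.prod_mul_distrib]
  simp only [wE_false, wE_true]
  ring

/-! ### graded substitutions attached to monomial multiples and renamings -/

open scoped Classical in
/-- the graded substitution realizing multiplication by the monomial `δ` and the renaming `π` -/
noncomputable def subst (g : G) (δ : Mon) (N : ℕ) (π : ℕ → ℕ) : FL K G →ₗ⁅K⁆ FL K G :=
  FreeLieAlgebra.lift K fun x : ℕ × G =>
    if x.2 = g ∧ x.1 = 0 then
      lnorm K G (of K (0, g)) (yRun K G (fun i => δ (i, false)) N)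
    else if x.2 = g⁻¹ ∧ x.1 = 0 then
      lnorm K G (of K (0, g⁻¹)) (yRun K G (fun i => δ (i, true)) N)
    else if x.2 = 1 then of K (π x.1, (1 : G))
    else of K x

lemma subst_of_g {g : G} (δ : Mon) (N : ℕ) (π : ℕ → ℕ) :
    subst g δ N π (of K (0, g)) =
      lnorm K G (of K (0, g)) (yRun K G (fun i => δ (i, false)) N) := by
  classical
  rw [subst, FreeLieAlgebra.lift_of_apply]
  simp

lemma subst_of_gi {g : G} (hg : g ^ 2 ≠ 1) (δ : Mon) (N : ℕ) (π : ℕ → ℕ) :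
    subst g δ N π (of K (0, g⁻¹)) =
      lnorm K G (of K (0, g⁻¹)) (yRun K G (fun i => δ (i, true)) N) := by
  classical
  rw [subst, FreeLieAlgebra.lift_of_apply]
  rw [if_neg (fun h => (gnei hg) h.1.symm), if_pos ⟨rfl, rfl⟩]

lemma subst_of_y {g : G} (hg : g ^ 2 ≠ 1) (δ : Mon) (N : ℕ) (π : ℕ → ℕ) (i : ℕ) :
    subst g δ N π (of K (i, (1 : G))) = of K (π i, (1 : G)) := by
  classical
  rw [subst, FreeLieAlgebra.lift_of_apply]
  rw [if_neg (fun h => (gne1 hg) h.1.symm), if_neg (fun h => (ginv1 hg) h.1.symm), if_pos rfl]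

lemma isHom_lnorm_y (l : G) (L : List ℕ) :
    ∀ x : FL K G, IsHom K G l x →
      IsHom K G l (lnorm K G x (L.map fun n => of K (n, (1 : G)))) := by
  induction L with
  | nil => intro x hx; simpa [lnorm_nil] using hx
  | cons n L ih =>
    intro x hx
    rw [List.map_cons, lnorm_cons]
    apply ih
    have := IsHom.lie hx (IsHom.var (K := K) (G := G) n 1)
    rwa [mul_one] at this

lemma subst_graded {g : G} (hg : g ^ 2 ≠ 1) (δ : Mon) (N : ℕ) (π : ℕ → ℕ) :
    IsGradedSubst K G (subst g δ N π) := by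
  classical
  intro i l
  rw [subst, FreeLieAlgebra.lift_of_apply]
  by_cases h1 : l = g ∧ i = 0
  · rw [if_pos h1, h1.1, yRun_eq_map]
    exact isHom_lnorm_y g _ _ (IsHom.var 0 g)
  · rw [if_neg h1]
    by_cases h2 : l = g⁻¹ ∧ i = 0
    · rw [if_pos h2, h2.1, yRun_eq_map]
      exact isHom_lnorm_y g⁻¹ _ _ (IsHom.var 0 g⁻¹)
    · rw [if_neg h2]
      by_cases h3 : l = 1
      · rw [if_pos h3, h3]
        exact IsHom.var (π i) 1
      · rw [if_neg h3]
        exact IsHom.var i l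

lemma E01_mem_Γg (g : G) : E3 K 0 1 ∈ utGrading K G g g⁻¹ g :=
  Submodule.subset_span (Or.inr (Or.inl ⟨rfl, rfl⟩))

lemma E12_mem_Γgi (g : G) : E3 K 1 2 ∈ utGrading K G g g⁻¹ g⁻¹ :=
  Submodule.subset_span (Or.inr (Or.inr (Or.inl ⟨rfl, rfl⟩)))

/-- composing an admissible evaluation with a graded substitution is admissible -/
lemma adm_comp {g : G} (hg : g ^ 2 ≠ 1) {ψ : FL K G →ₗ⁅K⁆ M3 K} (hψ : Adm g ψ)
    (δ : Mon) (N : ℕ) (π : ℕ → ℕ) :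
    Adm g (ψ.comp (subst g δ N π)) := by
  classical
  intro i l
  rw [LieHom.comp_apply, subst, FreeLieAlgebra.lift_of_apply]
  by_cases h1 : l = g ∧ i = 0
  · rw [if_pos h1, h1.1, yRun_eq_map,
      eval_lnorm_u hg hψ _ _ _ (psi_of_g hg hψ)]
    exact Submodule.smul_mem _ _ (E01_mem_Γg g)
  · rw [if_neg h1]
    by_cases h2 : l = g⁻¹ ∧ i = 0
    · rw [if_pos h2, h2.1, yRun_eq_map,
        eval_lnorm_v hg hψ _ _ _ (psi_of_gi hg hψ)]
      exact Submodule.smul_mem _ _ (E12_mem_Γgi g)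
    · rw [if_neg h2]
      by_cases h3 : l = 1
      · rw [if_pos h3, h3]
        exact hψ (π i) 1
      · rw [if_neg h3]
        exact hψ i l

lemma uE_comp {g : G} (hg : g ^ 2 ≠ 1) (ψ : FL K G →ₗ⁅K⁆ M3 K)
    (δ : Mon) (N : ℕ) (π : ℕ → ℕ) (i : ℕ) :
    uE (ψ.comp (subst g δ N π)) i = uE ψ (π i) := by
  simp only [uE, LieHom.comp_apply, subst_of_y hg]

lemma vE_comp {g : G} (hg : g ^ 2 ≠ 1) (ψ : FL K G →ₗ⁅K⁆ M3 K)
    (δ : Mon) (N : ℕ) (π : ℕ → ℕ) (i : ℕ) :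
    vE (ψ.comp (subst g δ N π)) i = vE ψ (π i) := by
  simp only [vE, LieHom.comp_apply, subst_of_y hg]

lemma wE_comp {g : G} (hg : g ^ 2 ≠ 1) (ψ : FL K G →ₗ⁅K⁆ M3 K)
    (δ : Mon) (N : ℕ) (π : ℕ → ℕ) :
    wE (ψ.comp (subst g δ N π)) = wE ψ ∘ vmap π := by
  funext x
  obtain ⟨i, b⟩ := x
  cases b
  · show uE (ψ.comp (subst g δ N π)) i = uE ψ (π i)
    exact uE_comp hg ψ δ N π i
  · show vE (ψ.comp (subst g δ N π)) i = vE ψ (π i)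
    exact vE_comp hg ψ δ N π i

lemma aE_comp {g : G} (hg : g ^ 2 ≠ 1) {ψ : FL K G →ₗ⁅K⁆ M3 K} (hψ : Adm g ψ)
    (δ : Mon) (N : ℕ) (π : ℕ → ℕ) :
    aE (ψ.comp (subst g δ N π)) g
      = aE ψ g * ∏ i ∈ Finset.range N, uE ψ i ^ δ (i, false) := by
  rw [aE, LieHom.comp_apply, subst_of_g, yRun_eq_map,
    eval_lnorm_u hg hψ _ _ _ (psi_of_g hg hψ), idxRun_prod]
  rw [Matrix.smul_apply, E3, Matrix.single_apply_same, smul_eq_mul, mul_one]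

lemma cE_comp {g : G} (hg : g ^ 2 ≠ 1) {ψ : FL K G →ₗ⁅K⁆ M3 K} (hψ : Adm g ψ)
    (δ : Mon) (N : ℕ) (π : ℕ → ℕ) :
    cE (ψ.comp (subst g δ N π)) g
      = cE ψ g * ∏ i ∈ Finset.range N, vE ψ i ^ δ (i, true) := by
  rw [cE, LieHom.comp_apply, subst_of_gi hg, yRun_eq_map,
    eval_lnorm_v hg hψ _ _ _ (psi_of_gi hg hψ), idxRun_prod]
  rw [Matrix.smul_apply, E3, Matrix.single_apply_same, smul_eq_mul, mul_one]

lemma delta_prod (w : ℕ × Bool → K) (δ : Mon) (N : ℕ)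
    (hN : ∀ x ∈ δ.support, x.1 < N) :
    δ.prod (fun x e => w x ^ e) =
      (∏ i ∈ Finset.range N, w (i, false) ^ δ (i, false)) *
        ∏ i ∈ Finset.range N, w (i, true) ^ δ (i, true) := by
  classical
  rw [Finsupp.prod]
  rw [Finset.prod_subset
    (show δ.support ⊆ Finset.range N ×ˢ (Finset.univ : Finset Bool) by
      intro x hx
      exact Finset.mem_product.mpr ⟨Finset.mem_range.mpr (hN x hx), Finset.mem_univ _⟩)
    (by
      intro x _ hnx
      rw [Finsupp.notMem_support_iff.mp hnx, pow_zero])]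
  rw [Finset.prod_product]
  rw [show (∏ i ∈ Finset.range N, ∏ b : Bool, w (i, b) ^ δ (i, b))
      = ∏ i ∈ Finset.range N, (w (i, false) ^ δ (i, false) * w (i, true) ^ δ (i, true)) from
    Finset.prod_congr rfl fun i _ => by rw [Fintype.prod_bool]; ring]
  rw [Finset.prod_mul_distrib]

/-- evaluation of a substituted type polynomial -/
lemma eval_subst {g : G} (hg : g ^ 2 ≠ 1) {ψ : FL K G →ₗ⁅K⁆ M3 K} (hψ : Adm g ψ)
    (d : AUData K) (δ : Mon) (N : ℕ) (hN : ∀ x ∈ δ.support, x.1 < N) (π : ℕ → ℕ) :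
    ψ (subst g δ N π (AUData.elem g d)) =
      (aE ψ g * cE ψ g *
        MvPolynomial.eval (wE ψ)
          ((MvPolynomial.monomial δ (1 : K)) * MvPolynomial.rename (vmap π) (Ppoly d))) •
        E3 K 0 2 := by
  have h1 : ψ (subst g δ N π (AUData.elem g d))
      = (ψ.comp (subst g δ N π)) (AUData.elem g d) := rfl
  rw [h1, eval_elem hg (adm_comp hg hψ δ N π) d, aE_comp hg hψ, cE_comp hg hψ, wE_comp hg]
  rw [map_mul, MvPolynomial.eval_monomial, MvPolynomial.eval_rename, one_mul,
    delta_prod (wE ψ) δ N hN]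
  simp only [wE_false, wE_true]
  ring_nf

end PartA

/-! ## Glue : from polynomial membership back to the free Lie algebra -/

section Glue

open MvPolynomial

variable {K : Type*} [Field K] {G : Type*} [CommGroup G]

attribute [local instance 100] LieRing.ofAssociativeRing

lemma mem_IdUT3_iff {g h : G} {x : FL K G} :
    x ∈ IdUT3 K G g h ↔ ∀ ψ : FL K G →ₗ⁅K⁆ M3 K,
      (∀ (i : ℕ) (l : G), ψ (of K (i, l)) ∈ utGrading K G g h l) → ψ x = 0 := Iff.rfl

lemma mem_tClosure_of_mem {S : Set (FL K G)} {x : FL K G} (hx : x ∈ S) :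
    x ∈ tClosure K G S := by
  show x ∈ sInf {I : LieIdeal K (FL K G) | IsTIdeal K G I ∧ S ⊆ ↑I}
  have h2 : x ∈ (↑(sInf {I : LieIdeal K (FL K G) | IsTIdeal K G I ∧ S ⊆ ↑I}) :
      Set (FL K G)) := by
    rw [LieSubmodule.coe_sInf]
    exact Set.mem_iInter₂.mpr fun I hI => hI.2 hx
  exact h2

lemma tClosure_isT (S : Set (FL K G)) : IsTIdeal K G (tClosure K G S) := by
  intro φ hφ a ha
  have ha' : ∀ I ∈ {I : LieIdeal K (FL K G) | IsTIdeal K G I ∧ S ⊆ ↑I}, a ∈ I := by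
    intro I hI
    have h2 : a ∈ (↑(sInf {I : LieIdeal K (FL K G) | IsTIdeal K G I ∧ S ⊆ ↑I}) :
        Set (FL K G)) := ha
    rw [LieSubmodule.coe_sInf] at h2
    exact Set.mem_iInter₂.mp h2 I hI
  have : ∀ I ∈ {I : LieIdeal K (FL K G) | IsTIdeal K G I ∧ S ⊆ ↑I}, φ a ∈ I :=
    fun I hI => hI.1 φ hφ a (ha' I hI)
  show φ a ∈ (↑(sInf {I : LieIdeal K (FL K G) | IsTIdeal K G I ∧ S ⊆ ↑I}) :
      Set (FL K G))
  rw [LieSubmodule.coe_sInf]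
  exact Set.mem_iInter₂.mpr this

/-- the ideal of polynomials vanishing as functions -/
def vanIdeal (K : Type*) [Field K] : Submodule K (RR K) where
  carrier := {P | ∀ w : ℕ × Bool → K, MvPolynomial.eval w P = 0}
  add_mem' := fun ha hb w => by rw [map_add, ha w, hb w, add_zero]
  zero_mem' := fun w => map_zero _
  smul_mem' := fun c P hP w => by
    rw [MvPolynomial.smul_eq_C_mul, map_mul, MvPolynomial.eval_C, hP w, mul_zero]

lemma eval_smul'' (w : ℕ × Bool → K) (c : K) (p : RR K) :
    MvPolynomial.eval w (c • p) = c * MvPolynomial.eval w p := by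
  rw [MvPolynomial.smul_eq_C_mul, map_mul, MvPolynomial.eval_C]

/-- the combined target submodule -/
noncomputable def ClS (S : Set (RR K)) : Submodule K (RR K) :=
  Submodule.span K (Qset S) ⊔ vanIdeal K

lemma span_Qset_rename (S : Set (RR K)) (π : ℕ → ℕ) (hπ : StrictMono π) {x : RR K}
    (hx : x ∈ Submodule.span K (Qset S)) :
    MvPolynomial.rename (vmap π) x ∈ Submodule.span K (Qset S) := by
  induction hx using Submodule.span_induction with
  | mem q hq =>
    obtain ⟨b, hb, σ, hσ, δ, rfl⟩ := hq
    apply Submodule.subset_span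
    refine ⟨b, hb, π ∘ σ, hπ.comp hσ, Finsupp.mapDomain (vmap π) δ, ?_⟩
    rw [map_mul, MvPolynomial.rename_monomial, MvPolynomial.rename_rename, vmap_comp]
  | zero => rw [map_zero]; exact Submodule.zero_mem _
  | add x y _ _ ihx ihy => rw [map_add]; exact Submodule.add_mem _ ihx ihy
  | smul c x _ ihx => rw [map_smul]; exact Submodule.smul_mem _ c ihx

lemma span_Qset_mono (S : Set (RR K)) (δ' : Mon) {x : RR K}
    (hx : x ∈ Submodule.span K (Qset S)) :
    (MvPolynomial.monomial δ' (1 : K)) * x ∈ Submodule.span K (Qset S) := by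
  induction hx using Submodule.span_induction with
  | mem q hq =>
    obtain ⟨b, hb, σ, hσ, δ, rfl⟩ := hq
    apply Submodule.subset_span
    refine ⟨b, hb, σ, hσ, δ' + δ, ?_⟩
    rw [← mul_assoc, MvPolynomial.monomial_mul, one_mul]
  | zero => rw [mul_zero]; exact Submodule.zero_mem _
  | add x y _ _ ihx ihy => rw [mul_add]; exact Submodule.add_mem _ ihx ihy
  | smul c x _ ihx => rw [mul_smul_comm]; exact Submodule.smul_mem _ c ihx

lemma ClS_rename (S : Set (RR K)) (π : ℕ → ℕ) (hπ : StrictMono π) {x : RR K}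
    (hx : x ∈ ClS S) : MvPolynomial.rename (vmap π) x ∈ ClS S := by
  obtain ⟨y, hy, z, hz, rfl⟩ := Submodule.mem_sup.mp hx
  rw [map_add]
  refine Submodule.add_mem _ (le_sup_left (α := Submodule K (RR K)) ?_)
    (le_sup_right (α := Submodule K (RR K)) ?_)
  · exact span_Qset_rename S π hπ hy
  · intro w
    rw [MvPolynomial.eval_rename]
    exact hz _

lemma ClS_mono (S : Set (RR K)) (δ' : Mon) {x : RR K}
    (hx : x ∈ ClS S) : (MvPolynomial.monomial δ' (1 : K)) * x ∈ ClS S := by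
  obtain ⟨y, hy, z, hz, rfl⟩ := Submodule.mem_sup.mp hx
  rw [mul_add]
  refine Submodule.add_mem _ (le_sup_left (α := Submodule K (RR K)) ?_)
    (le_sup_right (α := Submodule K (RR K)) ?_)
  · exact span_Qset_mono S δ' hy
  · intro w
    rw [map_mul, hz w, mul_zero]

lemma mem_ClS_self {S : Set (RR K)} {s : RR K} (hs : s ∈ S) : s ∈ ClS S := by
  apply le_sup_left (α := Submodule K (RR K))
  apply Submodule.subset_span
  refine ⟨s, hs, id, strictMono_id, 0, ?_⟩
  rw [show vmap id = id from vmap_id, MvPolynomial.rename_id]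
  rw [MvPolynomial.monomial_zero', MvPolynomial.C_1, one_mul, AlgHom.id_apply]

lemma ClS_monotone {S S' : Set (RR K)} (h : S ⊆ S') : ClS S ≤ ClS S' := by
  apply sup_le_sup_right
  apply Submodule.span_mono
  rintro q ⟨b, hb, σ, hσ, δ, rfl⟩
  exact ⟨b, h hb, σ, hσ, δ, rfl⟩

lemma finset_bound (Cl : ℕ → Submodule K (RR K)) (hmono : Monotone Cl)
    (B : Finset (RR K)) (hall : ∀ b ∈ B, ∃ n, b ∈ Cl n) : ∃ n, ∀ b ∈ B, b ∈ Cl n := by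
  classical
  revert hall
  induction B using Finset.induction with
  | empty => exact fun _ => ⟨0, by simp⟩
  | @insert a s ha ih =>
    intro hall
    obtain ⟨n₁, hn₁⟩ := ih (fun b hb => hall b (Finset.mem_insert_of_mem hb))
    obtain ⟨n₂, hn₂⟩ := hall a (Finset.mem_insert_self a s)
    refine ⟨max n₁ n₂, fun b hb => ?_⟩
    rcases Finset.mem_insert.mp hb with rfl | hb
    · exact hmono (le_max_right n₁ n₂) hn₂
    · exact hmono (le_max_left n₁ n₂) (hn₁ b hb)

/-- the selection of a finite subset whose consequences cover everything -/
lemma exists_finite_subset (A' : Set (FL K G)) (P : FL K G → RR K) :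
    ∃ F : Finset (FL K G), ↑F ⊆ A' ∧
      ∀ f ∈ A', P f ∈ ClS (P '' (↑F : Set (FL K G))) := by
  classical
  by_contra hcon
  push_neg at hcon
  have pick : ∀ F : Finset (FL K G), ↑F ⊆ A' →
      ∃ x, x ∈ A' ∧ P x ∉ ClS (P '' (↑F : Set (FL K G))) := by
    intro F hF
    obtain ⟨x, hx1, hx2⟩ := hcon F hF
    exact ⟨x, hx1, hx2⟩
  set T : ℕ → {F : Finset (FL K G) // ↑F ⊆ A'} := fun n => Nat.rec ⟨∅, by simp⟩
    (fun _ p => ⟨insert (pick p.1 p.2).choose p.1, by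
      rw [Finset.coe_insert]
      exact Set.insert_subset (pick p.1 p.2).choose_spec.1 p.2⟩) n with hT
  set x : ℕ → FL K G := fun n => (pick (T n).1 (T n).2).choose with hx
  have hxA : ∀ n, x n ∈ A' := fun n => (pick (T n).1 (T n).2).choose_spec.1
  have hxnot : ∀ n, P (x n) ∉ ClS (P '' (↑(T n).1 : Set (FL K G))) :=
    fun n => (pick (T n).1 (T n).2).choose_spec.2
  have hxmem : ∀ n, x n ∈ (T (n + 1)).1 := fun n => Finset.mem_insert_self _ _
  have hmonoT : ∀ a b, a ≤ b → (T a).1 ⊆ (T b).1 := by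
    intro a b hab
    induction b, hab using Nat.le_induction with
    | base => exact Finset.Subset.refl _
    | succ b hab ih => exact ih.trans (Finset.subset_insert _ _)
  set Cl : ℕ → Submodule K (RR K) := fun n => ClS (P '' (↑(T n).1 : Set (FL K G))) with hCl
  have hmonoCl : Monotone Cl := by
    intro a b hab
    exact ClS_monotone (Set.image_mono (hmonoT a b hab))
  set U : Submodule K (RR K) := ⨆ n, Cl n with hU
  have hmemU : ∀ {q : RR K}, q ∈ U ↔ ∃ n, q ∈ Cl n := fun {q} =>
    Submodule.mem_iSup_of_directed _ hmonoCl.directed_le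
  have hincU : ∀ (π : ℕ → ℕ), StrictMono π → ∀ q ∈ U, MvPolynomial.rename (vmap π) q ∈ U := by
    intro π hπ q hq
    obtain ⟨n, hn⟩ := hmemU.mp hq
    exact hmemU.mpr ⟨n, ClS_rename _ π hπ hn⟩
  have hmonU : ∀ (δ : Mon), ∀ q ∈ U, (MvPolynomial.monomial δ (1 : K)) * q ∈ U := by
    intro δ q hq
    obtain ⟨n, hn⟩ := hmemU.mp hq
    exact hmemU.mpr ⟨n, ClS_mono _ δ hn⟩
  obtain ⟨B, hBU, hUB⟩ := noetherian_step U hincU hmonU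
  have hBn : ∃ n, ∀ b ∈ B, b ∈ Cl n :=
    finset_bound Cl hmonoCl B (fun b hb => hmemU.mp (hBU hb))
  obtain ⟨n₀, hn₀⟩ := hBn
  have hspan : Submodule.span K (Qset (↑B : Set (RR K))) ≤ Cl n₀ := by
    rw [Submodule.span_le]
    rintro q ⟨b, hb, σ, hσ, δ, rfl⟩
    exact ClS_mono _ δ (ClS_rename _ σ hσ (hn₀ b hb))
  have hfin : P (x n₀) ∈ Cl n₀ := by
    apply hspan
    apply hUB
    have : P (x n₀) ∈ Cl (n₀ + 1) :=
      mem_ClS_self (Set.mem_image_of_mem P (hxmem n₀))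
    exact (le_iSup Cl (n₀ + 1) : Cl (n₀ + 1) ≤ U) this
  exact hxnot n₀ hfin

open scoped Classical in
noncomputable def Pof (g : G) (f : FL K G) : RR K :=
  if h : IsAU K g f then Ppoly h.choose else 0

lemma Pof_eval {g : G} (hg : g ^ 2 ≠ 1) {f : FL K G} (hf : IsAU K g f)
    {ψ : FL K G →ₗ⁅K⁆ M3 K} (hψ : Adm g ψ) :
    ψ f = (aE ψ g * cE ψ g * MvPolynomial.eval (wE ψ) (Pof g f)) • E3 K 0 2 := by
  simp only [Pof]
  rw [dif_pos hf]
  conv_lhs => rw [hf.choose_spec.2]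
  exact eval_elem hg hψ _

lemma span_to_lie {g : G} (hg : g ^ 2 ≠ 1) (F : Set (FL K G)) (hF : ∀ b ∈ F, IsAU K g b)
    {pc : RR K} (hpc : pc ∈ Submodule.span K (Qset (Pof g '' F))) :
    ∃ hh, hh ∈ tClosure K G F ∧ ∀ ψ : FL K G →ₗ⁅K⁆ M3 K, Adm g ψ →
      ψ hh = (aE ψ g * cE ψ g * MvPolynomial.eval (wE ψ) pc) • E3 K 0 2 := by
  induction hpc using Submodule.span_induction with
  | mem q hq =>
    obtain ⟨b', ⟨b, hbF, rfl⟩, π, hπ, δ, rfl⟩ := hq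
    refine ⟨subst g δ (suppBd δ + 1) π b, ?_, ?_⟩
    · exact (tClosure_isT F) _ (subst_graded hg δ _ π) b (mem_tClosure_of_mem hbF)
    · intro ψ hψ
      have hAU := hF b hbF
      simp only [Pof]
      rw [dif_pos hAU]
      conv_lhs => rw [hAU.choose_spec.2]
      exact eval_subst hg hψ _ δ _ (fun x hx => Nat.lt_succ_of_le (suppBd_spec hx)) π
  | zero =>
    refine ⟨0, zero_mem _, fun ψ hψ => ?_⟩
    rw [map_zero ψ, map_zero, mul_zero, zero_smul]
  | add x y hxs hys ihx ihy =>
    obtain ⟨h1, hm1, he1⟩ := ihx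
    obtain ⟨h2, hm2, he2⟩ := ihy
    refine ⟨h1 + h2, add_mem hm1 hm2, fun ψ hψ => ?_⟩
    rw [map_add ψ, he1 ψ hψ, he2 ψ hψ, map_add, mul_add, add_smul]
  | smul c x hxs ihx =>
    obtain ⟨h1, hm1, he1⟩ := ihx
    refine ⟨c • h1, SMulMemClass.smul_mem c hm1, fun ψ hψ => ?_⟩
    rw [map_smul ψ, he1 ψ hψ, eval_smul'', smul_smul]
    congr 1
    ring

end Glue

attribute [local instance 100] LieRing.ofAssociativeRing

/-- **Lemma.** If `J` is a `T_G`-ideal containing `Id_G(UT₃⁽⁻⁾, Γ(g, g⁻¹))` and `A` is the set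
of polynomials of type `(g, g⁻¹)` belonging to `J`, then there is a finite subset `Afin ⊆ A`
with `A ⊆ ⟨Afin⟩^{T_G} + Id_G(UT₃⁽⁻⁾, Γ(g, g⁻¹))`. -/
theorem stmt11 (K : Type*) [Field K] (G : Type*) [CommGroup G] (g : G) (hg : g ^ 2 ≠ 1)
    (J : LieIdeal K (FL K G)) (hJ : IsTIdeal K G J) (hId : IdUT3 K G g g⁻¹ ≤ J) :
    ∃ Afin : Set (FL K G), Afin ⊆ {f | IsAU K g f ∧ f ∈ J} ∧ Afin.Finite ∧
      {f | IsAU K g f ∧ f ∈ J} ⊆ ↑(tClosure K G Afin ⊔ IdUT3 K G g g⁻¹) := by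
  classical
  obtain ⟨F, hFA, hFall⟩ := exists_finite_subset {f | IsAU K g f ∧ f ∈ J} (Pof g)
  refine ⟨↑F, hFA, F.finite_toSet, ?_⟩
  intro f hf
  have hAU : IsAU K g f := hf.1
  have hP : Pof g f ∈ ClS (Pof g '' (↑F : Set (FL K G))) := hFall f hf
  obtain ⟨pc, hpc, pn, hpn, hsum⟩ := Submodule.mem_sup.mp hP
  obtain ⟨hh, hhmem, hheval⟩ :=
    span_to_lie hg (↑F : Set (FL K G)) (fun b hb => (hFA hb).1) hpc
  have hdiff : f - hh ∈ IdUT3 K G g g⁻¹ := by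
    rw [mem_IdUT3_iff]
    intro ψ hψ
    rw [lieHom_map_sub, Pof_eval hg hAU (hψ := hψ), hheval ψ hψ, ← hsum, map_add,
      show MvPolynomial.eval (wE ψ) pn = 0 from hpn (wE ψ), add_zero, sub_self]
  rw [SetLike.mem_coe, LieSubmodule.mem_sup]
  exact ⟨hh, hhmem, f - hh, hdiff, by abel⟩
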